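/- Let s ∈ ℂ with 2s ∉ ℤ, let 0 ≤ ℓ ≤ n, and let λ, μ ∈ Λ_{s^ℓ}(n). Then λ ≈ μ if and only if wt(λ) = wt(μ) and Σ_{i=1}^n λ_i = Σ_{i=1}^n μ_i. -/

import Mathlib

open Finset

noncomputable section

/-- The `i`-th standard basis vector of `ℂ^n`. -/
def eps (n : ℕ) (i : Fin n) : Fin n → ℂ := fun t => if t = i then 1 else 0

/-- The standard symmetric bilinear form on `ℂ^n`. -/
def pform {n : ℕ} (x y : Fin n → ℂ) : ℂ := ∑ i, x i * y i

/-- The integral Weyl group `W_λ`: the subgroup of `S_n` generated by the transpositions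
`s_{ij}` with `λ_i - λ_j ∈ ℤ`. -/
def IntegralWeyl (n : ℕ) (lam : Fin n → ℂ) : Subgroup (Equiv.Perm (Fin n)) :=
  Subgroup.closure
    {σ | ∃ i j : Fin n, i ≠ j ∧ (∃ m : ℤ, lam i - lam j = (m : ℂ)) ∧ σ = Equiv.swap i j}

/-- The relation `λ ≈ μ`: there are `w ∈ W_λ`, finitely many pairwise orthogonal roots
`α_t = ε_{a t} - ε_{b t}` with `(λ, ᾱ_t) = 0`, and integers `k_t`, such that
`μ = w (λ - ∑_t k_t α_t)`. -/
def approx (n : ℕ) (lam mu : Fin n → ℂ) : Prop :=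
  ∃ w ∈ IntegralWeyl n lam, ∃ (N : ℕ) (a b : Fin N → Fin n) (k : Fin N → ℤ),
    (∀ t, a t ≠ b t) ∧
    (∀ t t', t ≠ t' →
      pform (eps n (a t) - eps n (b t)) (eps n (a t') - eps n (b t')) = 0) ∧
    (∀ t, pform lam (eps n (a t) + eps n (b t)) = 0) ∧
    mu = (lam - ∑ t, (k t : ℂ) • (eps n (a t) - eps n (b t))) ∘ w

/-- Membership in `Λ_{s^ℓ}(n)` (indices written `0`-based: the first `ℓ` coordinates are
congruent to `s` mod `ℤ`, the remaining ones to `-s`). -/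
def InLambda (n ℓ : ℕ) (s : ℂ) (lam : Fin n → ℂ) : Prop :=
  ∀ i : Fin n, (i.val < ℓ → ∃ m : ℤ, lam i - s = (m : ℂ)) ∧
    (ℓ ≤ i.val → ∃ m : ℤ, lam i + s = (m : ℂ))

open scoped Classical in
/-- The weight function `wt(λ) : ℤ → ℤ` of `λ ∈ Λ_{s^ℓ}(n)`:
`wt(λ) = ∑_{i ≤ ℓ} δ_{λ_i - s} - ∑_{i > ℓ} δ_{-λ_i - s}`. -/
def wtFn (n ℓ : ℕ) (s : ℂ) (lam : Fin n → ℂ) : ℤ → ℤ := fun a =>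
  (∑ i ∈ Finset.univ.filter (fun i : Fin n => i.val < ℓ),
      if lam i - s = (a : ℂ) then 1 else 0)
  - ∑ i ∈ Finset.univ.filter (fun i : Fin n => ℓ ≤ i.val),
      if -lam i - s = (a : ℂ) then 1 else 0

lemma pform_lam_add {n : ℕ} (lam : Fin n → ℂ) {i j : Fin n} (h : i ≠ j) :
    pform lam (eps n i + eps n j) = lam i + lam j := by
  unfold pform eps
  simp only [Pi.add_apply, mul_add, Finset.sum_add_distrib, mul_ite, mul_one, mul_zero]
  rw [Finset.sum_ite_eq' univ i lam, Finset.sum_ite_eq' univ j lam]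
  simp

lemma pform_root_root {n : ℕ} (a b c d : Fin n) :
    pform (eps n a - eps n b) (eps n c - eps n d) =
      ((if a = c then 1 else 0) - (if a = d then 1 else 0)
        - (if b = c then 1 else 0) + (if b = d then 1 else 0) : ℂ) := by
  unfold pform eps
  simp only [Pi.sub_apply, sub_mul, mul_sub, mul_ite, mul_one, mul_zero]
  rw [Finset.sum_sub_distrib, Finset.sum_ite_eq' univ c, Finset.sum_ite_eq' univ d]
  simp only [mem_univ, if_true]
  have h : ∀ x y : Fin n, (if x = y then (1:ℂ) else 0) = if y = x then 1 else 0 := by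
    intro x y; by_cases hxy : x = y <;> simp [hxy, Ne.symm, eq_comm]
  rw [h c a, h c b, h d a, h d b]
  ring


def Bp {n : ℕ} (ℓ : ℕ) (σ : Equiv.Perm (Fin n)) : Prop :=
  ∀ i : Fin n, ((σ i).val < ℓ ↔ i.val < ℓ)

lemma bp_swap {n ℓ : ℕ} {i j : Fin n} (h : i.val < ℓ ↔ j.val < ℓ) :
    Bp ℓ (Equiv.swap i j) := by
  intro x
  rcases eq_or_ne x i with rfl | hxi
  · rw [Equiv.swap_apply_left]; exact h.symm
  rcases eq_or_ne x j with rfl | hxj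
  · rw [Equiv.swap_apply_right]; exact h
  · rw [Equiv.swap_apply_of_ne_of_ne hxi hxj]

lemma same_block_of_int {n ℓ : ℕ} {s : ℂ} {lam : Fin n → ℂ} (h1 : InLambda n ℓ s lam)
    (hs : ∀ m : ℤ, 2 * s ≠ (m : ℂ)) {i j : Fin n} {m : ℤ} (hm : lam i - lam j = (m : ℂ)) :
    (i.val < ℓ ↔ j.val < ℓ) := by
  constructor
  · intro hi
    by_contra hj
    obtain ⟨m1, hm1⟩ := (h1 i).1 hi
    obtain ⟨m2, hm2⟩ := (h1 j).2 (not_lt.mp hj)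
    apply hs (m2 + m - m1)
    have : 2 * s = (lam j + s) - (lam i - s) + (lam i - lam j) := by ring
    rw [this, hm1, hm2, hm]; push_cast; ring
  · intro hj
    by_contra hi
    obtain ⟨m1, hm1⟩ := (h1 j).1 hj
    obtain ⟨m2, hm2⟩ := (h1 i).2 (not_lt.mp hi)
    apply hs (m2 - m1 - m)
    have : 2 * s = (lam i + s) - (lam j - s) - (lam i - lam j) := by ring
    rw [this, hm1, hm2, hm]; push_cast; ring
end
noncomputable section
lemma bp_of_mem {n ℓ : ℕ} {s : ℂ} {lam : Fin n → ℂ} (h1 : InLambda n ℓ s lam)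
    (hs : ∀ m : ℤ, 2 * s ≠ (m : ℂ)) {w : Equiv.Perm (Fin n)}
    (hw : w ∈ IntegralWeyl n lam) : Bp ℓ w := by
  induction hw using Subgroup.closure_induction with
  | mem x hx =>
    obtain ⟨i, j, hij, ⟨m, hm⟩, rfl⟩ := hx
    exact bp_swap (same_block_of_int h1 hs hm)
  | one => intro i; rfl
  | mul x y hx hy px py => intro i; exact (px (y i)).trans (py i)
  | inv x hx px =>
    intro i
    have := px (x⁻¹ i)
    simpa using this.symm

lemma mem_of_bp_aux {n ℓ : ℕ} {s : ℂ} {lam : Fin n → ℂ} (h1 : InLambda n ℓ s lam) :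
    ∀ (m : ℕ) (σ : Equiv.Perm (Fin n)), (univ.filter fun i => σ i ≠ i).card ≤ m →
      Bp ℓ σ → σ ∈ IntegralWeyl n lam := by
  intro m
  induction m with
  | zero =>
    intro σ hc _
    have : σ = 1 := by
      by_contra hσ
      obtain ⟨i, hi⟩ : ∃ i, σ i ≠ i := by
        by_contra hall; push_neg at hall; exact hσ (Equiv.ext hall)
      have : i ∈ univ.filter fun i => σ i ≠ i := by simp [hi]
      have := Finset.card_pos.mpr ⟨i, this⟩
      omega
    rw [this]; exact one_mem _
  | succ m ih =>
    intro σ hc hbp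
    by_cases hσ : σ = 1
    · rw [hσ]; exact one_mem _
    · obtain ⟨i, hi⟩ : ∃ i, σ i ≠ i := by
        by_contra hall
        push_neg at hall
        exact hσ (Equiv.ext hall)
      set σ' := Equiv.swap i (σ i) * σ with hσ'
      have hfix : ∀ j, σ j = j → σ' j = j := by
        intro j hj
        have hji : j ≠ i := fun h => hi (h ▸ hj)
        have hjsi : j ≠ σ i := by
          intro h
          exact hji (σ.injective (hj.trans h))
        simp [hσ', Equiv.Perm.mul_apply, hj, Equiv.swap_apply_of_ne_of_ne hji hjsi]
      have hfi : σ' i = i := by simp [hσ', Equiv.Perm.mul_apply]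
      have hsub : (univ.filter fun j => σ' j ≠ j) ⊂ (univ.filter fun j => σ j ≠ j) := by
        constructor
        · intro j hj
          simp only [mem_filter, mem_univ, true_and] at hj ⊢
          intro h
          exact hj (hfix j h)
        · intro hsub'
          have : i ∈ univ.filter fun j => σ j ≠ j := by simp [hi]
          have := hsub' this
          simp [hfi] at this
      have hcard : (univ.filter fun j => σ' j ≠ j).card ≤ m := by
        have := Finset.card_lt_card hsub
        omega
      have hbpsw : Bp ℓ (Equiv.swap i (σ i)) := bp_swap (hbp i).symm
      have hbp' : Bp ℓ σ' := by
        intro j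
        exact (hbpsw (σ j)).trans (hbp j)
      have hmem' := ih σ' hcard hbp'
      have hswmem : Equiv.swap i (σ i) ∈ IntegralWeyl n lam := by
        apply Subgroup.subset_closure
        refine ⟨i, σ i, fun h => hi h.symm, ?_, rfl⟩
        by_cases hblk : i.val < ℓ
        · obtain ⟨m1, hm1⟩ := (h1 i).1 hblk
          obtain ⟨m2, hm2⟩ := (h1 (σ i)).1 ((hbp i).mpr hblk)
          exact ⟨m1 - m2, by push_cast; rw [← hm1, ← hm2]; ring⟩
        · obtain ⟨m1, hm1⟩ := (h1 i).2 (not_lt.mp hblk)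
          obtain ⟨m2, hm2⟩ := (h1 (σ i)).2 (not_lt.mp fun h => hblk ((hbp i).mp h))
          exact ⟨m1 - m2, by push_cast; rw [← hm1, ← hm2]; ring⟩
      have : σ = Equiv.swap i (σ i) * σ' := by
        rw [hσ', ← mul_assoc, Equiv.swap_mul_self, one_mul]
      rw [this]
      exact mul_mem hswmem hmem'

lemma mem_of_bp {n ℓ : ℕ} {s : ℂ} {lam : Fin n → ℂ} (h1 : InLambda n ℓ s lam)
    {σ : Equiv.Perm (Fin n)} (hbp : Bp ℓ σ) : σ ∈ IntegralWeyl n lam :=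
  mem_of_bp_aux h1 _ σ le_rfl hbp

open scoped Classical in
lemma exists_comp_perm {n : ℕ} (p q : Fin n → ℤ)
    (h : ∀ a : ℤ, (univ.filter fun i => p i = a).card = (univ.filter fun i => q i = a).card) :
    ∃ σ : Equiv.Perm (Fin n), p = q ∘ σ := by
  have hperm : (List.ofFn p).Perm (List.ofFn q) := by
    rw [← Multiset.coe_eq_coe]
    apply Multiset.ext.2
    intro a
    have hcount : ∀ r : Fin n → ℤ,
        Multiset.count a (↑(List.ofFn r)) = (univ.filter fun i => r i = a).card := by
      intro r
      rw [List.ofFn_eq_map, ← Multiset.map_coe, Multiset.count_map]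
      rw [Finset.card, Finset.filter_val]
      rw [show (Finset.univ : Finset (Fin n)).val = ↑(List.finRange n) from rfl]
      congr 1
      apply Multiset.filter_congr
      intro x _
      exact eq_comm
    rw [hcount p, hcount q, h a]
  have h1 : (List.ofFn (p ∘ (Tuple.sort p))).Perm (List.ofFn (q ∘ (Tuple.sort q))) :=
    ((Tuple.sort p).ofFn_comp_perm p).trans (hperm.trans ((Tuple.sort q).ofFn_comp_perm q).symm)
  have heq : p ∘ (Tuple.sort p) = q ∘ (Tuple.sort q) :=
    List.ofFn_injective (List.Perm.eq_of_sortedLE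
      (Tuple.monotone_sort p).sortedLE_ofFn (Tuple.monotone_sort q).sortedLE_ofFn h1)
  refine ⟨(Tuple.sort p).symm.trans (Tuple.sort q), ?_⟩
  funext i
  have := congrFun heq ((Tuple.sort p).symm i)
  simpa using this

open scoped Classical in
lemma core {n ℓ : ℕ} (f g : Fin n → ℤ)
    (hw : ∀ x : ℤ,
      (((univ.filter fun i : Fin n => i.val < ℓ ∧ f i = x).card : ℤ) -
        ((univ.filter fun i : Fin n => ¬ i.val < ℓ ∧ f i = x).card : ℤ)) =
      (((univ.filter fun i : Fin n => i.val < ℓ ∧ g i = x).card : ℤ) -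
        ((univ.filter fun i : Fin n => ¬ i.val < ℓ ∧ g i = x).card : ℤ))) :
    ∃ (v : Equiv.Perm (Fin n)) (N : ℕ) (a b : Fin N → Fin n) (k : Fin N → ℤ),
      (∀ i : Fin n, ((v i).val < ℓ ↔ i.val < ℓ)) ∧
      (∀ t, (a t).val < ℓ) ∧ (∀ t, ¬ (b t).val < ℓ) ∧
      Function.Injective a ∧ Function.Injective b ∧
      (∀ t, f (a t) = f (b t)) ∧
      (∀ i : Fin n, g (v i) = f i -
        ∑ t, ((if i = a t then k t else 0) + (if i = b t then k t else 0))) := by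
  set p : Fin n → ℤ := fun i => if i.val < ℓ then f i else g i with hp
  set q : Fin n → ℤ := fun i => if i.val < ℓ then g i else f i with hq
  have hcnt : ∀ x : ℤ,
      (univ.filter fun i => p i = x).card = (univ.filter fun i => q i = x).card := by
    intro x
    have hsplit : ∀ r : Fin n → ℤ,
        (univ.filter fun i => r i = x).card =
          (univ.filter fun i : Fin n => i.val < ℓ ∧ r i = x).card +
          (univ.filter fun i : Fin n => ¬ i.val < ℓ ∧ r i = x).card := by
      intro r
      rw [← Finset.card_filter_add_card_filter_not (s := univ.filter fun i => r i = x)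
        (fun i : Fin n => i.val < ℓ)]
      rw [Finset.filter_filter, Finset.filter_filter]
      congr 1
      · congr 1; apply Finset.filter_congr; intro i _; exact and_comm
      · congr 1; apply Finset.filter_congr; intro i _; exact and_comm
    have hfp : (univ.filter fun i : Fin n => i.val < ℓ ∧ p i = x) =
        (univ.filter fun i : Fin n => i.val < ℓ ∧ f i = x) := by
      apply Finset.filter_congr; intro i _
      constructor
      · rintro ⟨h1, h2⟩; exact ⟨h1, by simpa [hp, h1] using h2⟩
      · rintro ⟨h1, h2⟩; exact ⟨h1, by simpa [hp, h1] using h2⟩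
    have hfp2 : (univ.filter fun i : Fin n => ¬ i.val < ℓ ∧ p i = x) =
        (univ.filter fun i : Fin n => ¬ i.val < ℓ ∧ g i = x) := by
      apply Finset.filter_congr; intro i _
      constructor
      · rintro ⟨h1, h2⟩; exact ⟨h1, by simpa [hp, h1] using h2⟩
      · rintro ⟨h1, h2⟩; exact ⟨h1, by simpa [hp, h1] using h2⟩
    have hfq : (univ.filter fun i : Fin n => i.val < ℓ ∧ q i = x) =
        (univ.filter fun i : Fin n => i.val < ℓ ∧ g i = x) := by
      apply Finset.filter_congr; intro i _
      constructor
      · rintro ⟨h1, h2⟩; exact ⟨h1, by simpa [hq, h1] using h2⟩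
      · rintro ⟨h1, h2⟩; exact ⟨h1, by simpa [hq, h1] using h2⟩
    have hfq2 : (univ.filter fun i : Fin n => ¬ i.val < ℓ ∧ q i = x) =
        (univ.filter fun i : Fin n => ¬ i.val < ℓ ∧ f i = x) := by
      apply Finset.filter_congr; intro i _
      constructor
      · rintro ⟨h1, h2⟩; exact ⟨h1, by simpa [hq, h1] using h2⟩
      · rintro ⟨h1, h2⟩; exact ⟨h1, by simpa [hq, h1] using h2⟩
    rw [hsplit p, hsplit q, hfp, hfp2, hfq, hfq2]
    have := hw x
    omega
  obtain ⟨σ, hσ⟩ := exists_comp_perm p q hcnt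
  have hpq : ∀ i, p i = q (σ i) := fun i => congrFun hσ i
  -- the sets of indices moved across the blocks by σ
  set T : Finset (Fin n) := univ.filter (fun i => i.val < ℓ ∧ ¬ (σ i).val < ℓ) with hTdef
  set T' : Finset (Fin n) := univ.filter (fun i => (σ i).val < ℓ ∧ ¬ i.val < ℓ) with hT'def
  have hmemT : ∀ i, i ∈ T ↔ (i.val < ℓ ∧ ¬ (σ i).val < ℓ) := by
    intro i; rw [hTdef]; simp
  have hmemT' : ∀ i, i ∈ T' ↔ ((σ i).val < ℓ ∧ ¬ i.val < ℓ) := by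
    intro i; rw [hT'def]; simp
  have hTdisj : ∀ i, i ∈ T → i ∈ T' → False := by
    intro i h h'
    exact ((hmemT' i).1 h').2 ((hmemT i).1 h).1
  have hcard0 : (univ.filter fun i => ((σ i).val < ℓ)).card =
      (univ.filter fun i : Fin n => i.val < ℓ).card := by
    apply Finset.card_nbij' (i := fun i => σ i) (j := fun i => σ.symm i)
    · intro x hx; simp only [coe_filter, Set.mem_setOf_eq, mem_filter, mem_univ, true_and] at hx ⊢; exact hx
    · intro x hx; simp only [coe_filter, Set.mem_setOf_eq, mem_filter, mem_univ, true_and] at hx ⊢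
      simpa using hx
    · intro x _; simp
    · intro x _; simp
  have hTT' : T.card = T'.card := by
    have hd1 : Disjoint T (univ.filter fun i : Fin n => i.val < ℓ ∧ (σ i).val < ℓ) := by
      rw [Finset.disjoint_left]
      intro i hi hi2
      rw [hmemT i] at hi
      simp only [mem_filter, mem_univ, true_and] at hi2
      tauto
    have hu1 : T ∪ (univ.filter fun i : Fin n => i.val < ℓ ∧ (σ i).val < ℓ) =
        univ.filter fun i : Fin n => i.val < ℓ := by
      ext i
      rw [mem_union, hmemT i]
      simp only [mem_filter, mem_univ, true_and]
      tauto
    have hc1 : T.card + (univ.filter fun i : Fin n => i.val < ℓ ∧ (σ i).val < ℓ).card =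
        (univ.filter fun i : Fin n => i.val < ℓ).card := by
      rw [← Finset.card_union_of_disjoint hd1, hu1]
    have hd2 : Disjoint T' (univ.filter fun i : Fin n => i.val < ℓ ∧ (σ i).val < ℓ) := by
      rw [Finset.disjoint_left]
      intro i hi hi2
      rw [hmemT' i] at hi
      simp only [mem_filter, mem_univ, true_and] at hi2
      tauto
    have hu2 : T' ∪ (univ.filter fun i : Fin n => i.val < ℓ ∧ (σ i).val < ℓ) =
        univ.filter fun i : Fin n => (σ i).val < ℓ := by
      ext i
      rw [mem_union, hmemT' i]
      simp only [mem_filter, mem_univ, true_and]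
      tauto
    have hc2 : T'.card + (univ.filter fun i : Fin n => i.val < ℓ ∧ (σ i).val < ℓ).card =
        (univ.filter fun i : Fin n => (σ i).val < ℓ).card := by
      rw [← Finset.card_union_of_disjoint hd2, hu2]
    omega
  have τ : {x // x ∈ T} ≃ {x // x ∈ T'} :=
    Fintype.equivOfCardEq (by rw [Fintype.card_coe, Fintype.card_coe, hTT'])
  set io : Fin n → Fin n := fun i =>
    if h : i ∈ T then ((τ ⟨i, h⟩ : {x // x ∈ T'}) : Fin n)
    else if h' : i ∈ T' then ((τ.symm ⟨i, h'⟩ : {x // x ∈ T}) : Fin n) else i with hiodef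
  have hioT : ∀ i (h : i ∈ T), io i = ((τ ⟨i, h⟩ : {x // x ∈ T'}) : Fin n) := by
    intro i h; rw [hiodef]; exact dif_pos h
  have hioTmem : ∀ i (h : i ∈ T), io i ∈ T' := by
    intro i h; rw [hioT i h]; exact (τ ⟨i, h⟩).2
  have hioT' : ∀ i (h : i ∈ T'), io i = ((τ.symm ⟨i, h⟩ : {x // x ∈ T}) : Fin n) := by
    intro i h
    rw [hiodef]
    simp only
    rw [dif_neg (fun hT => hTdisj i hT h), dif_pos h]
  have hioT'mem : ∀ i (h : i ∈ T'), io i ∈ T := by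
    intro i h; rw [hioT' i h]; exact (τ.symm ⟨i, h⟩).2
  have hioid : ∀ i, i ∉ T → i ∉ T' → io i = i := by
    intro i h h'
    rw [hiodef]
    simp only
    rw [dif_neg h, dif_neg h']
  have hioinv : Function.Involutive io := by
    intro i
    by_cases h : i ∈ T
    · have h2 := hioTmem i h
      rw [hioT i h] at h2 ⊢
      rw [hioT' _ h2, Subtype.coe_eta, Equiv.symm_apply_apply]
    · by_cases h' : i ∈ T'
      · have h2 := hioT'mem i h'
        rw [hioT' i h'] at h2 ⊢
        rw [hioT _ h2, Subtype.coe_eta, Equiv.apply_symm_apply]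
      · rw [hioid i h h', hioid i h h']
  -- the block-preserving permutation
  set v : Fin n → Fin n := fun i => if i.val < ℓ then σ (io i) else io (σ.symm i) with hvdef
  have hvI : ∀ i : Fin n, i.val < ℓ → ((v i).val < ℓ) := by
    intro i hi
    have hv : v i = σ (io i) := if_pos hi
    by_cases h : i ∈ T
    · rw [hv]; exact ((hmemT' _).1 (hioTmem i h)).1
    · rw [hv, hioid i h (fun h' => ((hmemT' i).1 h').2 hi)]
      by_contra hc
      exact h ((hmemT i).2 ⟨hi, hc⟩)
  have hvJ : ∀ i : Fin n, ¬ i.val < ℓ → ¬ ((v i).val < ℓ) := by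
    intro i hi
    have hv : v i = io (σ.symm i) := if_neg hi
    set j := σ.symm i with hj
    have hσj : σ j = i := Equiv.apply_symm_apply σ i
    have hjT' : j ∉ T' := fun h => hi (hσj ▸ ((hmemT' j).1 h).1)
    by_cases h : j ∈ T
    · rw [hv]; exact ((hmemT' _).1 (hioTmem j h)).2
    · rw [hv, hioid j h hjT']
      intro hjl
      exact h ((hmemT j).2 ⟨hjl, fun hc => hi (hσj ▸ hc)⟩)
  have hbp : ∀ i : Fin n, ((v i).val < ℓ ↔ i.val < ℓ) := by
    intro i
    constructor
    · intro h; by_contra hc; exact hvJ i hc h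
    · exact hvI i
  have hvinj : Function.Injective v := by
    intro i i' hvv
    by_cases hi : i.val < ℓ <;> by_cases hi' : i'.val < ℓ
    · rw [show v i = σ (io i) from if_pos hi, show v i' = σ (io i') from if_pos hi'] at hvv
      exact hioinv.injective (σ.injective hvv)
    · exact absurd (hvv ▸ hvI i hi) (hvJ i' hi')
    · exact absurd (hvv.symm ▸ hvI i' hi') (hvJ i hi)
    · rw [show v i = io (σ.symm i) from if_neg hi, show v i' = io (σ.symm i') from if_neg hi'] at hvv
      exact σ.symm.injective (hioinv.injective hvv)
  have hvbij : Function.Bijective v := Finite.injective_iff_bijective.mp hvinj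
  set e := T.equivFin with hedef
  set A : Fin T.card → Fin n := fun t => ((e.symm t : {x // x ∈ T}) : Fin n) with hAdef
  set B : Fin T.card → Fin n := fun t => σ (A t) with hBdef
  set K : Fin T.card → ℤ := fun t => f (A t) - g (io (A t)) with hKdef
  have haT : ∀ t, A t ∈ T := fun t => (e.symm t).2
  have hAlt : ∀ t, (A t).val < ℓ := fun t => ((hmemT _).1 (haT t)).1
  have hBnlt : ∀ t, ¬ (B t).val < ℓ := fun t => ((hmemT _).1 (haT t)).2
  have hAinj : Function.Injective A := by
    intro t t' h
    apply e.symm.injective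
    exact Subtype.ext h
  have hAe : ∀ i (h : i ∈ T), A (e ⟨i, h⟩) = i := by
    intro i h
    show ((e.symm (e ⟨i, h⟩) : {x // x ∈ T}) : Fin n) = i
    rw [Equiv.symm_apply_apply]
  refine ⟨Equiv.ofBijective v hvbij, T.card, A, B, K, hbp, hAlt, hBnlt, hAinj,
    fun t t' h => hAinj (σ.injective h), ?_, ?_⟩
  · intro t
    have h1 : p (A t) = f (A t) := if_pos (hAlt t)
    have h2 : q (σ (A t)) = f (σ (A t)) := if_neg (hBnlt t)
    rw [hBdef]
    show f (A t) = f (σ (A t))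
    rw [← h1, ← h2]
    exact hpq _
  · intro i
    show g (v i) = f i - ∑ t, ((if i = A t then K t else 0) + (if i = B t then K t else 0))
    by_cases hi : i.val < ℓ
    · have hv : v i = σ (io i) := by simp only [hvdef]; exact if_pos hi
      have hbz : ∀ t, (if i = B t then K t else 0) = 0 := by
        intro t
        refine if_neg ?_
        intro h
        exact hBnlt t (h ▸ hi)
      by_cases hiT : i ∈ T
      · have ht0 : A (e ⟨i, hiT⟩) = i := hAe i hiT
        set t₀ := e ⟨i, hiT⟩ with ht₀def
        have hsum : ∑ t, ((if i = A t then K t else 0) + (if i = B t then K t else 0)) = K t₀ := by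
          rw [Finset.sum_congr rfl (fun t _ => by rw [hbz t, add_zero])]
          rw [Finset.sum_eq_single t₀]
          · rw [if_pos ht0.symm]
          · intro t _ htne
            refine if_neg ?_
            intro h
            exact htne (hAinj (ht0.trans h).symm)
          · intro h; exact absurd (mem_univ t₀) h
        have hioi' : io i ∈ T' := hioTmem i hiT
        have hioml := (hmemT' _).1 hioi'
        have hgio : g (io i) = g (σ (io i)) := by
          have h1 : p (io i) = g (io i) := if_neg hioml.2
          have h2 : q (σ (io i)) = g (σ (io i)) := if_pos hioml.1
          rw [← h1, ← h2]; exact hpq _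
        have hK : K t₀ = f i - g (io i) := by
          rw [hKdef]
          show f (A t₀) - g (io (A t₀)) = f i - g (io i)
          rw [ht0]
        rw [hsum, hv, ← hgio, hK]
        ring
      · have hiT' : i ∉ T' := fun h' => ((hmemT' i).1 h').2 hi
        have hioi : io i = i := hioid i hiT hiT'
        have hσlt : (σ i).val < ℓ := by
          by_contra hc
          exact hiT ((hmemT i).2 ⟨hi, hc⟩)
        have hsum : ∑ t, ((if i = A t then K t else 0) + (if i = B t then K t else 0)) = 0 := by
          apply Finset.sum_eq_zero
          intro t _
          rw [hbz t, add_zero]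
          refine if_neg ?_
          intro h
          exact hiT (h.symm ▸ haT t)
        have hgf : g (σ i) = f i := by
          have h1 : p i = f i := if_pos hi
          have h2 : q (σ i) = g (σ i) := if_pos hσlt
          rw [← h1, ← h2]; exact (hpq i).symm
        rw [hsum, hv, hioi, hgf]
        ring
    · have hv : v i = io (σ.symm i) := by simp only [hvdef]; exact if_neg hi
      set j := σ.symm i with hjdef
      have hσj : σ j = i := σ.apply_symm_apply i
      have haz : ∀ t, (if i = A t then K t else 0) = 0 := by
        intro t
        refine if_neg ?_
        intro h
        exact hi (h.symm ▸ hAlt t)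
      by_cases hjT : j ∈ T
      · have hAt0 : A (e ⟨j, hjT⟩) = j := hAe j hjT
        set t₀ := e ⟨j, hjT⟩ with ht₀def
        have hBt0 : B t₀ = i := by
          rw [hBdef]
          show σ (A t₀) = i
          rw [hAt0, hσj]
        have hsum : ∑ t, ((if i = A t then K t else 0) + (if i = B t then K t else 0)) = K t₀ := by
          rw [Finset.sum_congr rfl (fun t _ => by rw [haz t, zero_add])]
          rw [Finset.sum_eq_single t₀]
          · rw [if_pos hBt0.symm]
          · intro t _ htne
            refine if_neg fun h => ?_
            have hAj : j = A t := σ.injective (hσj.trans h)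
            exact htne (hAinj (hAt0.trans hAj).symm)
          · intro h; exact absurd (mem_univ t₀) h
        have hjlt : j.val < ℓ := ((hmemT j).1 hjT).1
        have hff : f j = f i := by
          have h1 : p j = f j := if_pos hjlt
          have h2 : q i = f i := if_neg hi
          rw [← h1, ← h2, ← hσj]
          exact hpq j
        have hK : K t₀ = f j - g (io j) := by
          rw [hKdef]
          show f (A t₀) - g (io (A t₀)) = f j - g (io j)
          rw [hAt0]
        rw [hsum, hv, hK, hff]
        ring
      · have hjT' : j ∉ T' := fun h => hi (hσj ▸ ((hmemT' j).1 h).1)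
        have hioj : io j = j := hioid j hjT hjT'
        have hjnlt : ¬ j.val < ℓ := by
          intro hjl
          exact hi (hσj ▸ (by
            by_contra hc
            exact hjT ((hmemT j).2 ⟨hjl, hc⟩)))
        have hsum : ∑ t, ((if i = A t then K t else 0) + (if i = B t then K t else 0)) = 0 := by
          apply Finset.sum_eq_zero
          intro t _
          rw [haz t, zero_add]
          refine if_neg fun h => ?_
          have hAj : j = A t := σ.injective (hσj.trans h)
          exact hjT (hAj ▸ haT t)
        have hgf : g j = f i := by
          have h1 : p j = g j := if_neg hjnlt
          have h2 : q i = f i := if_neg hi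
          rw [← h1, ← h2, ← hσj]
          exact hpq j
        rw [hsum, hv, hioj, hgf]
        ring


lemma exists_zf {n ℓ : ℕ} {s : ℂ} {lam : Fin n → ℂ} (h1 : InLambda n ℓ s lam) :
    ∃ f : Fin n → ℤ, ∀ i : Fin n,
      (i.val < ℓ → lam i = s + f i) ∧ (¬ i.val < ℓ → lam i = -s - f i) := by
  classical
  choose F hF using fun i => (h1 i).1
  choose G hG using fun i => (h1 i).2
  refine ⟨fun i => if h : i.val < ℓ then F i h else -(G i (not_lt.mp h)), fun i => ⟨?_, ?_⟩⟩
  · intro h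
    beta_reduce
    rw [dif_pos h]
    have := hF i h
    linear_combination this
  · intro h
    beta_reduce
    rw [dif_neg h]
    have := hG i (not_lt.mp h)
    push_cast
    linear_combination this

open scoped Classical in
lemma wt_count {n ℓ : ℕ} {s : ℂ} {lam : Fin n → ℂ} {f : Fin n → ℤ}
    (hf : ∀ i : Fin n, (i.val < ℓ → lam i = s + f i) ∧ (¬ i.val < ℓ → lam i = -s - f i))
    (x : ℤ) :
    wtFn n ℓ s lam x =
      ((univ.filter fun i : Fin n => i.val < ℓ ∧ f i = x).card : ℤ) -
        ((univ.filter fun i : Fin n => ¬ i.val < ℓ ∧ f i = x).card : ℤ) := by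
  unfold wtFn
  congr 1
  · rw [← Finset.sum_boole]
    rw [← Finset.sum_filter_add_sum_filter_not univ (fun i : Fin n => i.val < ℓ)
      (fun i => if i.val < ℓ ∧ f i = x then (1:ℤ) else 0)]
    have h2 : ∑ i ∈ univ.filter (fun i : Fin n => ¬ i.val < ℓ),
        (if i.val < ℓ ∧ f i = x then (1:ℤ) else 0) = 0 := by
      apply Finset.sum_eq_zero
      intro i hi
      simp only [mem_filter] at hi
      rw [if_neg]
      tauto
    rw [h2, add_zero]
    apply Finset.sum_congr rfl
    intro i hi
    simp only [mem_filter, mem_univ, true_and] at hi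
    have hli : lam i - s = (f i : ℂ) := by
      rw [(hf i).1 hi]; ring
    by_cases hc : f i = x
    · rw [if_pos, if_pos ⟨hi, hc⟩]
      rw [hli, hc]
    · rw [if_neg, if_neg (fun hcon => hc hcon.2)]
      rw [hli]
      exact_mod_cast hc
  · rw [← Finset.sum_boole]
    rw [← Finset.sum_filter_add_sum_filter_not univ (fun i : Fin n => ¬ i.val < ℓ)
      (fun i => if ¬ i.val < ℓ ∧ f i = x then (1:ℤ) else 0)]
    have h2 : ∑ i ∈ univ.filter (fun i : Fin n => ¬ ¬ i.val < ℓ),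
        (if ¬ i.val < ℓ ∧ f i = x then (1:ℤ) else 0) = 0 := by
      apply Finset.sum_eq_zero
      intro i hi
      simp only [mem_filter] at hi
      rw [if_neg]
      tauto
    rw [h2, add_zero]
    have h3 : univ.filter (fun i : Fin n => ℓ ≤ i.val) =
        univ.filter (fun i : Fin n => ¬ i.val < ℓ) := by
      ext i
      simp [not_lt]
    rw [h3]
    apply Finset.sum_congr rfl
    intro i hi
    simp only [mem_filter, mem_univ, true_and] at hi
    have hli : -lam i - s = (f i : ℂ) := by
      rw [(hf i).2 hi]; push_cast; ring
    by_cases hc : f i = x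
    · rw [if_pos, if_pos ⟨hi, hc⟩]
      rw [hli, hc]
    · rw [if_neg, if_neg (fun hcon => hc hcon.2)]
      rw [hli]
      exact_mod_cast hc

/-- For `2s ∉ ℤ` and `λ, μ ∈ Λ_{s^ℓ}(n)`: `λ ≈ μ` if and only if
`wt(λ) = wt(μ)` and `∑ λ_i = ∑ μ_i`. -/
theorem stmt12 {n ℓ : ℕ} (hl : ℓ ≤ n) (s : ℂ) (hs : ∀ m : ℤ, 2 * s ≠ (m : ℂ))
    (lam mu : Fin n → ℂ) (h1 : InLambda n ℓ s lam) (h2 : InLambda n ℓ s mu) :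
    approx n lam mu ↔
      (wtFn n ℓ s lam = wtFn n ℓ s mu ∧ ∑ i, lam i = ∑ i, mu i) := by
  classical
  obtain ⟨f, hf⟩ := exists_zf h1
  obtain ⟨g, hg⟩ := exists_zf h2
  constructor
  · rintro ⟨w, hwmem, N, a, b, k, hab, horth, hpair, heq⟩
    have hbpw : Bp ℓ w := bp_of_mem h1 hs hwmem
    have hlamab : ∀ t, lam (a t) + lam (b t) = 0 := fun t => by
      rw [← pform_lam_add lam (hab t)]; exact hpair t
    have hblk : ∀ t, ((a t).val < ℓ ∧ ¬ (b t).val < ℓ) ∨ (¬ (a t).val < ℓ ∧ (b t).val < ℓ) := by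
      intro t
      by_cases hA : (a t).val < ℓ <;> by_cases hB : (b t).val < ℓ
      · exfalso
        apply hs (-(f (a t) + f (b t)))
        have h1' := (hf (a t)).1 hA
        have h2' := (hf (b t)).1 hB
        have := hlamab t
        rw [h1', h2'] at this
        push_cast
        linear_combination this
      · exact Or.inl ⟨hA, hB⟩
      · exact Or.inr ⟨hA, hB⟩
      · exfalso
        apply hs (-(f (a t) + f (b t)))
        have h1' := (hf (a t)).2 hA
        have h2' := (hf (b t)).2 hB
        have := hlamab t
        rw [h1', h2'] at this
        push_cast
        linear_combination -this
    have hne4 : ∀ t t', t ≠ t' → a t ≠ a t' ∧ a t ≠ b t' ∧ b t ≠ a t' ∧ b t ≠ b t' := by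
      intro t t' htt'
      have horr := horth t t' htt'
      rw [pform_root_root] at horr
      refine ⟨?_, ?_, ?_, ?_⟩
      · intro h
        have hx2 : ¬ a t = b t' := fun hc => hab t' (h.symm.trans hc)
        have hx3 : ¬ b t = a t' := fun hc => hab t (h.trans hc.symm)
        rw [if_pos h, if_neg hx2, if_neg hx3] at horr
        by_cases hx4 : b t = b t'
        · rw [if_pos hx4] at horr; norm_num at horr
        · rw [if_neg hx4] at horr; norm_num at horr
      · intro h
        have hx1 : ¬ a t = a t' := fun hc => hab t' (hc.symm.trans h)
        have hx4 : ¬ b t = b t' := fun hc => hab t (h.trans hc.symm)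
        rw [if_neg hx1, if_pos h, if_neg hx4] at horr
        by_cases hx3 : b t = a t'
        · rw [if_pos hx3] at horr; norm_num at horr
        · rw [if_neg hx3] at horr; norm_num at horr
      · intro h
        have hx1 : ¬ a t = a t' := fun hc => hab t (hc.trans h.symm)
        have hx4 : ¬ b t = b t' := fun hc => hab t' (h.symm.trans hc)
        rw [if_neg hx1, if_pos h, if_neg hx4] at horr
        by_cases hx2 : a t = b t'
        · rw [if_pos hx2] at horr; norm_num at horr
        · rw [if_neg hx2] at horr; norm_num at horr
      · intro h
        have hx2 : ¬ a t = b t' := fun hc => hab t (hc.trans h.symm)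
        have hx3 : ¬ b t = a t' := fun hc => hab t' (hc.symm.trans h)
        rw [if_neg hx2, if_neg hx3, if_pos h] at horr
        by_cases hx1 : a t = a t'
        · rw [if_pos hx1] at horr; norm_num at horr
        · rw [if_neg hx1] at horr; norm_num at horr
    have hainjF : ∀ t t', a t = a t' → t = t' := by
      intro t t' h
      by_contra hne
      exact (hne4 t t' hne).1 h
    have hbinjF : ∀ t t', b t = b t' → t = t' := by
      intro t t' h
      by_contra hne
      exact (hne4 t t' hne).2.2.2 h
    set nu := lam - ∑ t, (k t : ℂ) • (eps n (a t) - eps n (b t)) with hnudef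
    have hco : ∀ j, nu j =
        lam j - ∑ t, (k t : ℂ) * ((if j = a t then 1 else 0) - (if j = b t then 1 else 0)) := by
      intro j
      rw [hnudef, Pi.sub_apply, Finset.sum_apply]
      congr 1
    have hmueq : ∀ j, mu j = nu (w j) := fun j => by rw [heq]; rfl
    have hva : ∀ t, nu (a t) = lam (a t) - k t := by
      intro t
      rw [hco (a t)]
      have hsum : ∑ t', (k t' : ℂ) *
          ((if a t = a t' then 1 else 0) - (if a t = b t' then 1 else 0)) = k t := by
        rw [Finset.sum_eq_single t]
        · rw [if_pos rfl, if_neg (hab t)]; ring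
        · intro t' _ hne
          rw [if_neg (hne4 t t' hne.symm).1, if_neg (hne4 t t' hne.symm).2.1]; ring
        · intro hcon; exact absurd (mem_univ t) hcon
      rw [hsum]
    have hvb : ∀ t, nu (b t) = lam (b t) + k t := by
      intro t
      rw [hco (b t)]
      have hsum : ∑ t', (k t' : ℂ) *
          ((if b t = a t' then 1 else 0) - (if b t = b t' then 1 else 0)) = -(k t) := by
        rw [Finset.sum_eq_single t]
        · rw [if_neg (fun hc => hab t hc.symm), if_pos rfl]; ring
        · intro t' _ hne
          rw [if_neg (hne4 t t' hne.symm).2.2.1, if_neg (hne4 t t' hne.symm).2.2.2]; ring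
        · intro hcon; exact absurd (mem_univ t) hcon
      rw [hsum]
      ring
    have hsums : ∑ i, mu i = ∑ i, lam i := by
      have h1s : ∑ i, mu i = ∑ i, nu (w i) :=
        Finset.sum_congr rfl (fun i _ => hmueq i)
      rw [h1s, Equiv.sum_comp w nu]
      rw [Finset.sum_congr rfl (fun i _ => hco i), Finset.sum_sub_distrib]
      rw [Finset.sum_comm]
      have hz : ∀ t, ∑ i, (k t : ℂ) *
          ((if i = a t then 1 else 0) - (if i = b t then 1 else 0)) = 0 := by
        intro t
        rw [← Finset.mul_sum, Finset.sum_sub_distrib]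
        rw [Finset.sum_ite_eq' univ (a t) (fun _ => (1:ℂ)),
          Finset.sum_ite_eq' univ (b t) (fun _ => (1:ℂ))]
        simp
      rw [Finset.sum_congr rfl (fun t _ => hz t), Finset.sum_const_zero, sub_zero]
    refine ⟨?_, hsums.symm⟩
    funext x
    set D : (Fin n → ℂ) → Fin n → ℤ := fun xi i =>
      if i.val < ℓ then (if xi i - s = (x:ℂ) then 1 else 0)
      else -(if -xi i - s = (x:ℂ) then 1 else 0) with hD
    have hwtD : ∀ xi : Fin n → ℂ, wtFn n ℓ s xi x = ∑ i, D xi i := by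
      intro xi
      rw [← Finset.sum_filter_add_sum_filter_not univ (fun i : Fin n => i.val < ℓ) (D xi)]
      unfold wtFn
      have e1 : ∑ i ∈ univ.filter (fun i : Fin n => i.val < ℓ), D xi i =
          ∑ i ∈ univ.filter (fun i : Fin n => i.val < ℓ),
            if xi i - s = (x:ℂ) then (1:ℤ) else 0 := by
        apply Finset.sum_congr rfl
        intro i hi
        simp only [mem_filter, mem_univ, true_and] at hi
        rw [hD]
        beta_reduce
        rw [if_pos hi]
      have e2 : ∑ i ∈ univ.filter (fun i : Fin n => ¬ i.val < ℓ), D xi i =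
          - ∑ i ∈ univ.filter (fun i : Fin n => ℓ ≤ i.val),
            if -xi i - s = (x:ℂ) then (1:ℤ) else 0 := by
        have h3 : univ.filter (fun i : Fin n => ℓ ≤ i.val) =
            univ.filter (fun i : Fin n => ¬ i.val < ℓ) := by
          ext i
          simp [not_lt]
        rw [h3, ← Finset.sum_neg_distrib]
        apply Finset.sum_congr rfl
        intro i hi
        simp only [mem_filter, mem_univ, true_and] at hi
        rw [hD]
        beta_reduce
        rw [if_neg hi]
      rw [e1, e2]
      ring
    rw [hwtD lam, hwtD mu]
    have hDmu : ∀ i, D mu i = D nu (w i) := by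
      intro i
      rw [hD]
      beta_reduce
      rw [hmueq i]
      by_cases hi : i.val < ℓ
      · rw [if_pos hi, if_pos ((hbpw i).mpr hi)]
      · rw [if_neg hi, if_neg (fun h => hi ((hbpw i).mp h))]
    have hstep1 : ∑ i, D mu i = ∑ i, D nu i := by
      rw [Finset.sum_congr rfl (fun i _ => hDmu i)]
      exact Equiv.sum_comp w (D nu)
    rw [hstep1]
    have hzero : ∑ i, (D nu i - D lam i) = 0 := by
      have hout : ∀ i, i ∉ (Finset.image a univ ∪ Finset.image b univ) →
          D nu i - D lam i = 0 := by
        intro i hi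
        have hnu_i : nu i = lam i := by
          rw [hco i]
          have hterm : ∀ t, (k t:ℂ) *
              ((if i = a t then 1 else 0) - (if i = b t then 1 else 0)) = 0 := by
            intro t
            have hia : i ≠ a t := fun h =>
              hi (Finset.mem_union_left _ (Finset.mem_image.2 ⟨t, mem_univ t, h.symm⟩))
            have hib : i ≠ b t := fun h =>
              hi (Finset.mem_union_right _ (Finset.mem_image.2 ⟨t, mem_univ t, h.symm⟩))
            rw [if_neg hia, if_neg hib]; ring
          rw [Finset.sum_congr rfl (fun t _ => hterm t), Finset.sum_const_zero, sub_zero]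
        rw [hD]
        beta_reduce
        rw [hnu_i]
        ring
      have hsub := Finset.sum_subset
        (Finset.subset_univ (Finset.image a univ ∪ Finset.image b univ))
        (fun i _ hiS => hout i hiS)
      rw [← hsub]
      have hdisjim : Disjoint (Finset.image a univ) (Finset.image b univ) := by
        rw [Finset.disjoint_left]
        intro x0 hx0 hx0'
        obtain ⟨t, _, rfl⟩ := Finset.mem_image.1 hx0
        obtain ⟨t', _, hbt⟩ := Finset.mem_image.1 hx0'
        by_cases htt : t' = t
        · exact hab t (htt ▸ hbt).symm
        · exact (hne4 t t' (fun hc => htt hc.symm)).2.1 hbt.symm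
      rw [Finset.sum_union hdisjim,
        Finset.sum_image (fun t _ t' _ h => hainjF t t' h),
        Finset.sum_image (fun t _ t' _ h => hbinjF t t' h),
        ← Finset.sum_add_distrib]
      apply Finset.sum_eq_zero
      intro t _
      have hvat := hva t
      have hvbt := hvb t
      have hlab : lam (a t) = - lam (b t) := by linear_combination hlamab t
      rcases hblk t with ⟨hA, hB⟩ | ⟨hA, hB⟩
      · have e1 : -nu (b t) - s = nu (a t) - s := by rw [hvat, hvbt, hlab]; ring
        have e2 : -lam (b t) - s = lam (a t) - s := by rw [hlab]
        rw [hD]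
        beta_reduce
        rw [if_pos hA, if_neg hB, if_pos hA, if_neg hB, e1, e2]
        ring
      · have e1 : -nu (a t) - s = nu (b t) - s := by rw [hvat, hvbt, hlab]; ring
        have e2 : -lam (a t) - s = lam (b t) - s := by rw [hlab]; ring
        rw [hD]
        beta_reduce
        rw [if_neg hA, if_pos hB, if_neg hA, if_pos hB, e1, e2]
        ring
    rw [Finset.sum_sub_distrib] at hzero
    omega
  · rintro ⟨hwt, -⟩
    have hw : ∀ x : ℤ,
        (((univ.filter fun i : Fin n => i.val < ℓ ∧ f i = x).card : ℤ) -
          ((univ.filter fun i : Fin n => ¬ i.val < ℓ ∧ f i = x).card : ℤ)) =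
        (((univ.filter fun i : Fin n => i.val < ℓ ∧ g i = x).card : ℤ) -
          ((univ.filter fun i : Fin n => ¬ i.val < ℓ ∧ g i = x).card : ℤ)) := by
      intro x
      rw [← wt_count hf x, ← wt_count hg x, hwt]
    obtain ⟨v, N, a, b, k, hbp, halt, hbnlt, hainj, hbinj, hfab, hmain⟩ := core f g hw
    have hbpinv : Bp ℓ v⁻¹ := by
      intro i
      have := hbp (v⁻¹ i)
      rw [Equiv.Perm.inv_def, Equiv.apply_symm_apply] at this
      exact this.symm
    refine ⟨v⁻¹, mem_of_bp h1 hbpinv, N, a, b, k, ?_, ?_, ?_, ?_⟩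
    · intro t h
      apply hbnlt t
      rw [← h]
      exact halt t
    · intro t t' htt'
      rw [pform_root_root]
      have h1' : a t ≠ a t' := fun h => htt' (hainj h)
      have h2' : a t ≠ b t' := fun h => hbnlt t' (h ▸ halt t)
      have h3' : b t ≠ a t' := fun h => hbnlt t (h.symm ▸ halt t')
      have h4' : b t ≠ b t' := fun h => htt' (hbinj h)
      rw [if_neg h1', if_neg h2', if_neg h3', if_neg h4']
      ring
    · intro t
      have habt : a t ≠ b t := by
        intro h
        apply hbnlt t
        rw [← h]
        exact halt t
      rw [pform_lam_add lam habt]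
      rw [(hf (a t)).1 (halt t), (hf (b t)).2 (hbnlt t), hfab t]
      ring
    · funext i0
      have key : ∀ j, mu (v j) =
          lam j - ∑ t, (k t : ℂ) * ((if j = a t then 1 else 0) - (if j = b t then 1 else 0)) := by
        intro j
        by_cases hj : j.val < ℓ
        · have hmu : mu (v j) = s + g (v j) := (hg (v j)).1 ((hbp j).mpr hj)
          have hlam : lam j = s + f j := (hf j).1 hj
          have hb0 : ∀ t, j ≠ b t := fun t h => hbnlt t (h ▸ hj)
          have hsum1 : ∑ t, (k t : ℂ) * ((if j = a t then 1 else 0) - (if j = b t then 1 else 0)) =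
              ∑ t, (if j = a t then (k t : ℂ) else 0) := by
            apply Finset.sum_congr rfl
            intro t _
            rw [if_neg (hb0 t), sub_zero, mul_ite, mul_one, mul_zero]
          have hsum2 : ((∑ t, ((if j = a t then k t else 0) + (if j = b t then k t else 0)) : ℤ) : ℂ) =
              ∑ t, (if j = a t then (k t : ℂ) else 0) := by
            push_cast
            apply Finset.sum_congr rfl
            intro t _
            rw [if_neg (hb0 t)]
            try (split <;> simp)
          rw [hmu, hmain j, hlam, hsum1, ← hsum2]
          push_cast
          ring
        · have hmu : mu (v j) = -s - g (v j) := (hg (v j)).2 (fun h => hj ((hbp j).mp h))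
          have hlam : lam j = -s - f j := (hf j).2 hj
          have ha0 : ∀ t, j ≠ a t := fun t h => hj (h ▸ halt t)
          have hsum1 : ∑ t, (k t : ℂ) * ((if j = a t then 1 else 0) - (if j = b t then 1 else 0)) =
              ∑ t, -(if j = b t then (k t : ℂ) else 0) := by
            apply Finset.sum_congr rfl
            intro t _
            rw [if_neg (ha0 t), zero_sub, mul_neg, mul_ite, mul_one, mul_zero]
          have hsum2 : ((∑ t, ((if j = a t then k t else 0) + (if j = b t then k t else 0)) : ℤ) : ℂ) =
              ∑ t, (if j = b t then (k t : ℂ) else 0) := by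
            push_cast
            apply Finset.sum_congr rfl
            intro t _
            rw [if_neg (ha0 t), zero_add]
            try (split <;> simp)
          rw [hmu, hmain j, hlam, hsum1, Finset.sum_neg_distrib, ← hsum2]
          push_cast
          ring
      have hco : ∀ j, (lam - ∑ t, (k t : ℂ) • (eps n (a t) - eps n (b t))) j =
          lam j - ∑ t, (k t : ℂ) * ((if j = a t then 1 else 0) - (if j = b t then 1 else 0)) := by
        intro j
        rw [Pi.sub_apply, Finset.sum_apply]
        congr 1
      show mu i0 = (lam - ∑ t, (k t : ℂ) • (eps n (a t) - eps n (b t))) (v⁻¹ i0)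
      rw [hco (v⁻¹ i0), ← key (v⁻¹ i0), Equiv.Perm.inv_def, Equiv.apply_symm_apply]

end
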